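/- Consider the Minkowski point-line relation C = {((z,θ,ζ,θ̂),(t,x,τ,ξ)) : x = z+tθ, τ = -θ·ξ, ζ = ξ, θ̂ = t(ξ - (ξ·θ)θ)} with θ ∈ S^{n-1}, ξ ≠ 0. If ((z,θ,ζ,θ̂),(t,x,τ,ξ)) ∈ C and |τ| = |ξ| (lightlike), then ζ is parallel to θ and θ̂ = 0. Conversely, if ζ is parallel to θ and (t,x,τ,ξ) satisfies the relation with ζ = ξ, then |τ| = |ξ|. -/
import Mathlib


open RealInnerProductSpace

/-- In the Minkowski point-line relation
`C = {((z,θ,ζ,θ̂),(t,x,τ,ξ)) : x = z+tθ, τ = -θ·ξ, ζ = ξ, θ̂ = t(ξ-(ξ·θ)θ)}`,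
the covector `(τ,ξ)` is lightlike (`|τ| = |ξ|`) iff `ζ` is parallel to `θ`;
and in the lightlike case moreover `θ̂ = 0`. -/
theorem minkowski_relation_lightlike_characterization {n : ℕ}
    (z x ζ ξ θ θhat : EuclideanSpace ℝ (Fin n)) (t τ : ℝ)
    (hθ : ‖θ‖ = 1) (hξ : ξ ≠ 0)
    (hx : x = z + t • θ) (hτ : τ = -⟪θ, ξ⟫) (hζ : ζ = ξ)
    (hθhat : θhat = t • (ξ - ⟪ξ, θ⟫ • θ)) :
    ((|τ| = ‖ξ‖) → (∃ c : ℝ, ζ = c • θ) ∧ θhat = 0)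
    ∧ ((∃ c : ℝ, ζ = c • θ) → |τ| = ‖ξ‖) := by
  have hθ0 : θ ≠ 0 := by
    intro h; rw [h, norm_zero] at hθ; exact one_ne_zero hθ.symm
  have hθθ : ⟪θ, θ⟫ = 1 := by
    rw [real_inner_self_eq_norm_sq, hθ]; norm_num
  constructor
  · intro hlight
    have h1 : |⟪θ, ξ⟫ / (‖θ‖ * ‖ξ‖)| = 1 := by
      rw [hθ, one_mul, abs_div, abs_of_nonneg (norm_nonneg ξ)]
      rw [hτ, abs_neg] at hlight
      rw [hlight, div_self]
      simpa using hξ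
    obtain ⟨-, r, hr, hrξ⟩ := (abs_real_inner_div_norm_mul_norm_eq_one_iff θ ξ).1 h1
    have hξθ : ⟪ξ, θ⟫ = r := by
      rw [hrξ, real_inner_smul_left, hθθ, mul_one]
    refine ⟨⟨r, by rw [hζ, hrξ]⟩, ?_⟩
    rw [hθhat, hξθ, hrξ, sub_self, smul_zero]
  · rintro ⟨c, hc⟩
    rw [hζ] at hc
    have : ⟪θ, ξ⟫ = c := by rw [hc, real_inner_smul_right, hθθ, mul_one]
    rw [hτ, this, abs_neg, hc, norm_smul, hθ, mul_one, Real.norm_eq_abs]
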